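/- Fix v ∈ [q^n], a subset V ⊆ F_q^n with |V| = v, s ∈ F_q^n, and errors e_a ∈ F_q with |e_a| ≤ k for all a ∈ V (where |e_a| denotes the representative in [-(q-1)/2, (q-1)/2]). Consider the state |ψ⟩ = (1/√v) Σ_{a ∈ V} |a⟩|a·s + e_a mod q⟩. After applying the QFT over F_q to all n+1 registers and measuring, the probability that the outcome (j, j*) satisfies j = -j* s mod q and j* ≠ 0 is at least v/(20 k q^n). -/

import Mathlib

lemma aux_cos (q : ℕ) [NeZero q] (x : ZMod q) (y : ℤ) (hy : ((y : ZMod q)) = x)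
    (hb : 10 * |y| ≤ (q : ℤ)) :
    (4 : ℝ) / 5 ≤ Real.cos (2 * Real.pi * x.val / q) := by
  have hq0 : (0:ℝ) < q := by
    have := NeZero.pos q; exact_mod_cast this
  have hdvd : (q:ℤ) ∣ (x.val : ℤ) - y := by
    have h0 : (((x.val : ℤ) - y : ℤ) : ZMod q) = 0 := by
      push_cast
      rw [hy]
      simp [ZMod.natCast_val, ZMod.cast_id]
    exact (ZMod.intCast_zmod_eq_zero_iff_dvd _ q).mp h0
  obtain ⟨c, hc⟩ := hdvd
  have hval : ((x.val : ℝ)) = y + q * c := by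
    have : ((x.val : ℤ)) = y + q * c := by linarith [hc]
    exact_mod_cast this
  have harg : 2 * Real.pi * x.val / q = 2 * Real.pi * y / q + c * (2 * Real.pi) := by
    rw [hval]; field_simp
  rw [harg, Real.cos_add_int_mul_two_pi]
  have hlb := Real.one_sub_sq_div_two_le_cos (x := 2 * Real.pi * y / q)
  have hy2 : (y:ℝ)^2 * 100 ≤ (q:ℝ)^2 := by
    have h1 : (10 * |y| : ℤ) ^ 2 ≤ ((q:ℤ))^2 := by
      have h2 : (0:ℤ) ≤ 10 * |y| := by positivity
      exact pow_le_pow_left₀ h2 hb 2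
    have h3 : (100 : ℤ) * y^2 ≤ (q:ℤ)^2 := by
      have := sq_abs y
      nlinarith
    have h5 : (((100 : ℤ) * y^2 : ℤ) : ℝ) ≤ (((q:ℤ)^2 : ℤ) : ℝ) := Int.cast_le.mpr h3
    push_cast at h5
    linarith
  have hpi : Real.pi < 3.15 := by
    have := Real.pi_lt_d2; norm_num at this ⊢; linarith
  have hpi0 : 0 < Real.pi := Real.pi_pos
  have hpisq : Real.pi ^ 2 < 9.9225 := by nlinarith
  have hsq : (2 * Real.pi * y / q) ^ 2 ≤ 2 / 5 := by
    rw [div_pow, div_le_iff₀ (by positivity)]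
    nlinarith [sq_nonneg ((y:ℝ)), hy2, hpisq]
  linarith


/-- For the noisy state `(1/√v) Σ_{a ∈ V} |a⟩|a·s + e_a⟩` with `|V| = v` and
`|e_a| ≤ k` (centered representatives), after applying the QFT over `F_q` to all
`n+1` registers and measuring, the outcome `(j, j*)` satisfies `j = -j* s` and
`j* ≠ 0` with probability at least `v/(20 k q^n)`. -/
theorem stmt4 (q n v k : ℕ) [Fact (Nat.Prime q)] (hk : 1 ≤ k) (hq : 20 * k < q)
    (V : Finset (Fin n → ZMod q)) (hV : V.card = v) (hv : 1 ≤ v)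
    (s : Fin n → ZMod q) (e : (Fin n → ZMod q) → ZMod q)
    (he : ∀ a ∈ V, |(e a).valMinAbs| ≤ (k : ℤ)) :
    (v : ℝ) / (20 * k * q ^ n) ≤
      ∑ j : Fin n → ZMod q, ∑ jstar : ZMod q,
        if (j = fun i => -jstar * s i) ∧ jstar ≠ 0 then
          ‖((1 / Real.sqrt v : ℝ) : ℂ) * ((1 / Real.sqrt (q ^ (n + 1)) : ℝ) : ℂ) *
            ∑ a ∈ V,
              Complex.exp (2 * Real.pi * Complex.I / q) ^
                ((∑ i, a i * j i) + ((∑ i, a i * s i) + e a) * jstar).val‖ ^ 2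
        else 0 := by
  classical
  have hqpos : 0 < q := (Fact.out (p := Nat.Prime q)).pos
  set ω : ℂ := Complex.exp (2 * Real.pi * Complex.I / q) with hω
  set c : ℂ := ((1 / Real.sqrt v : ℝ) : ℂ) * ((1 / Real.sqrt (q ^ (n + 1)) : ℝ) : ℂ) with hc
  set F : ZMod q → ℝ := fun t => ‖c * ∑ a ∈ V, ω ^ ((e a * t).val)‖ ^ 2 with hF
  -- Step 1: collapse the double sum
  have hswap :
      (∑ j : Fin n → ZMod q, ∑ jstar : ZMod q,
        if (j = fun i => -jstar * s i) ∧ jstar ≠ 0 then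
          ‖c * ∑ a ∈ V, ω ^
                ((∑ i, a i * j i) + ((∑ i, a i * s i) + e a) * jstar).val‖ ^ 2
        else 0)
      = ∑ t : ZMod q, if t ≠ 0 then F t else 0 := by
    rw [Finset.sum_comm]
    refine Finset.sum_congr rfl fun t _ => ?_
    by_cases ht : t = 0
    · simp [ht]
    · simp only [ht, ne_eq, not_false_eq_true, and_true, if_true]
      rw [Finset.sum_eq_single_of_mem (fun i => -t * s i) (Finset.mem_univ _)
        (fun b _ hb => if_neg hb), if_pos rfl]
      have hz : ∀ a : Fin n → ZMod q,
          (∑ i, a i * (-t * s i)) + ((∑ i, a i * s i) + e a) * t = e a * t := by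
        intro a
        have h1 : ∑ i, a i * (-t * s i) = -t * ∑ i, a i * s i := by
          rw [Finset.mul_sum]
          exact Finset.sum_congr rfl fun i _ => by ring
        rw [h1]; ring
      simp only [hz, hF]
  rw [hswap]
  -- Step 2: the window parameter m
  set m : ℕ := q / (10 * k) with hm
  have hk10 : 0 < 10 * k := by omega
  have hm1 : 1 ≤ m := (Nat.one_le_div_iff hk10).mpr (by omega)
  have h10 : 10 * k * m ≤ q := by
    rw [hm, mul_comm]
    exact Nat.div_mul_le_self q (10 * k)
  have h20 : q < 20 * k * m := by
    have hd := Nat.div_add_mod q (10 * k)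
    rw [← hm] at hd
    have hr : q % (10 * k) < 10 * k := Nat.mod_lt q hk10
    nlinarith [hm1, hd, hr]
  -- Step 3: the index set
  set I : Finset ℤ := (Finset.Icc (-(m:ℤ)) (m:ℤ)).erase 0 with hI
  have hcardI : I.card = 2 * m := by
    rw [hI, Finset.card_erase_of_mem (by simp [Finset.mem_Icc]), Int.card_Icc]
    omega
  have h2mq : 2 * m < q := by nlinarith
  have hinj : Set.InjOn (fun i : ℤ => (i : ZMod q)) I := by
    intro i hi i' hi' hii
    have hii' : (i : ZMod q) = (i' : ZMod q) := hii
    rw [Finset.mem_coe, hI, Finset.mem_erase, Finset.mem_Icc] at hi hi'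
    have h0 : ((i - i' : ℤ) : ZMod q) = 0 := by push_cast; rw [hii']; ring
    have hdvd : (q:ℤ) ∣ i - i' := (ZMod.intCast_zmod_eq_zero_iff_dvd _ q).mp h0
    have habs : |i - i'| < (q:ℤ) := by rw [abs_lt]; omega
    have := Int.eq_zero_of_abs_lt_dvd hdvd habs
    omega
  have hne : ∀ i ∈ I, ((i : ZMod q)) ≠ 0 := by
    intro i hi
    rw [hI, Finset.mem_erase, Finset.mem_Icc] at hi
    intro h0
    have hdvd : (q:ℤ) ∣ i := (ZMod.intCast_zmod_eq_zero_iff_dvd _ q).mp h0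
    have habs : |i| < (q:ℤ) := by rw [abs_lt]; omega
    have := Int.eq_zero_of_abs_lt_dvd hdvd habs
    omega
  -- Step 4: per-term lower bound
  have hvpos : (0:ℝ) < v := by exact_mod_cast hv
  have hQpos : (0:ℝ) < (q:ℝ) ^ (n+1) := by positivity
  have hterm : ∀ i ∈ I, (16 * v) / (25 * (q:ℝ) ^ (n+1)) ≤ F ((i : ZMod q)) := by
    intro i hi
    simp only [hI, Finset.mem_erase, Finset.mem_Icc] at hi
    set t : ZMod q := (i : ZMod q) with hti
    -- real part of each summand ≥ 4/5
    have hre : ∀ a ∈ V, (4:ℝ)/5 ≤ (ω ^ ((e a * t).val)).re := by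
      intro a ha
      have hy : (((e a).valMinAbs * i : ℤ) : ZMod q) = e a * t := by
        push_cast
        rw [hti]
      have hb : 10 * |(e a).valMinAbs * i| ≤ (q : ℤ) := by
        rw [abs_mul]
        have h1 : |(e a).valMinAbs| ≤ (k:ℤ) := he a ha
        have h2 : |i| ≤ (m:ℤ) := abs_le.mpr ⟨hi.2.1, hi.2.2⟩
        have h3 : |(e a).valMinAbs| * |i| ≤ (k:ℤ) * m :=
          mul_le_mul h1 h2 (abs_nonneg _) (by positivity)
        have h4 : (10 * k * m : ℤ) ≤ q := by exact_mod_cast h10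
        linarith
      have hcos := aux_cos q (e a * t) ((e a).valMinAbs * i) hy hb
      have hrw : ω ^ ((e a * t).val) =
          Complex.exp (((2 * Real.pi * ((e a * t).val) / q : ℝ)) * Complex.I) := by
        rw [hω, ← Complex.exp_nat_mul]
        congr 1
        push_cast
        have : (q:ℂ) ≠ 0 := by exact_mod_cast hqpos.ne'
        field_simp
      rw [hrw, Complex.exp_ofReal_mul_I_re]
      exact hcos
    -- sum of real parts
    have hreS : (4:ℝ)/5 * v ≤ (∑ a ∈ V, ω ^ ((e a * t).val)).re := by
      rw [Complex.re_sum]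
      calc (4:ℝ)/5 * v = ∑ _a ∈ V, (4:ℝ)/5 := by rw [Finset.sum_const, hV]; ring
        _ ≤ _ := Finset.sum_le_sum hre
    have habsS : (4:ℝ)/5 * v ≤ ‖∑ a ∈ V, ω ^ ((e a * t).val)‖ :=
      le_trans hreS (Complex.re_le_norm _)
    -- assemble
    have hcabs : ‖c‖ = (1 / Real.sqrt v) * (1 / Real.sqrt ((q:ℝ) ^ (n+1))) := by
      rw [hc, norm_mul, Complex.norm_real, Complex.norm_real, Real.norm_eq_abs, Real.norm_eq_abs]
      have h1 : (0:ℝ) ≤ 1 / Real.sqrt v := by positivity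
      have h2 : (0:ℝ) ≤ 1 / Real.sqrt ((q:ℝ)^(n+1)) := by positivity
      rw [abs_of_nonneg h1]
      congr 1
      · push_cast
        rw [abs_of_nonneg (by positivity)]
    have hFt : F t = (‖c‖ * ‖∑ a ∈ V, ω ^ ((e a * t).val)‖) ^ 2 := by
      rw [hF]; simp only [norm_mul]
    rw [hFt, hcabs]
    have hsv : Real.sqrt v > 0 := Real.sqrt_pos.mpr hvpos
    have hsQ : Real.sqrt ((q:ℝ)^(n+1)) > 0 := Real.sqrt_pos.mpr hQpos
    have key : (1 / Real.sqrt v * (1 / Real.sqrt ((q:ℝ)^(n+1))) * ((4:ℝ)/5 * v)) ^ 2 ≤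
        (1 / Real.sqrt v * (1 / Real.sqrt ((q:ℝ)^(n+1))) *
          ‖∑ a ∈ V, ω ^ ((e a * t).val)‖) ^ 2 := by
      apply pow_le_pow_left₀ (by positivity)
      apply mul_le_mul_of_nonneg_left habsS (by positivity)
    refine le_trans (le_of_eq ?_) key
    rw [mul_pow, mul_pow, div_pow, div_pow, one_pow,
      Real.sq_sqrt hvpos.le, Real.sq_sqrt hQpos.le]
    field_simp
    ring
  -- Step 5: sum over the window
  have hnonneg : ∀ t : ZMod q, t ∈ Finset.univ → 0 ≤ if t ≠ 0 then F t else 0 := by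
    intro t _
    split
    · rw [hF]; positivity
    · exact le_refl 0
  have hsub : I.image (fun i : ℤ => (i : ZMod q)) ⊆ Finset.univ := Finset.subset_univ _
  have hstep :
      ∑ i ∈ I, F ((i : ZMod q)) ≤ ∑ t : ZMod q, if t ≠ 0 then F t else 0 := by
    calc ∑ i ∈ I, F ((i : ZMod q))
        = ∑ i ∈ I, (if ((i : ZMod q)) ≠ 0 then F ((i : ZMod q)) else 0) := by
          refine Finset.sum_congr rfl fun i hi => ?_
          rw [if_pos (hne i hi)]
      _ = ∑ t ∈ I.image (fun i : ℤ => (i : ZMod q)), (if t ≠ 0 then F t else 0) := by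
          rw [Finset.sum_image (fun i hi i' hi' h => hinj hi hi' h)]
      _ ≤ ∑ t : ZMod q, if t ≠ 0 then F t else 0 :=
          Finset.sum_le_sum_of_subset_of_nonneg hsub (fun t ht _ => hnonneg t ht)
  have hlow : (2 * m : ℝ) * (16 * v / (25 * (q:ℝ) ^ (n+1))) ≤ ∑ i ∈ I, F ((i : ZMod q)) := by
    calc (2 * m : ℝ) * (16 * v / (25 * (q:ℝ) ^ (n+1)))
        = ∑ _i ∈ I, (16 * v / (25 * (q:ℝ) ^ (n+1))) := by
          rw [Finset.sum_const, hcardI]; push_cast; ring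
      _ ≤ _ := Finset.sum_le_sum hterm
  -- Step 6: final arithmetic
  have hfin : (v : ℝ) / (20 * k * q ^ n) ≤ (2 * m : ℝ) * (16 * v / (25 * (q:ℝ) ^ (n+1))) := by
    have hqn : (0:ℝ) < (q:ℝ) ^ n := by positivity
    have hq0 : (0:ℝ) < q := by exact_mod_cast hqpos
    have hk0 : (0:ℝ) < k := by exact_mod_cast hk
    have h20' : (q:ℝ) < 20 * k * m := by exact_mod_cast h20
    rw [div_le_iff₀ (by positivity)]
    have hexp : (q:ℝ) ^ (n+1) = q * q ^ n := by ring
    rw [hexp]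
    have hid : 2 * (m:ℝ) * (16 * v / (25 * ((q:ℝ) * q ^ n))) * (20 * k * q ^ n)
        = (640 * ((k:ℝ) * m) * v) / (25 * q) := by
      field_simp
      ring
    rw [hid, le_div_iff₀ (by positivity)]
    nlinarith [hvpos, h20', hq0, mul_pos hvpos hq0]
  calc (v : ℝ) / (20 * k * q ^ n) ≤ _ := hfin
    _ ≤ ∑ i ∈ I, F ((i : ZMod q)) := hlow
    _ ≤ _ := hstep
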